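/- arXiv:1807.00105 — 7 statements merged into one kernel-verified Lean document; each statement's English description precedes it below -/
import Mathlib

section
/- Let r_1,...,r_d be positive integers, L = lcm(r_1,...,r_d), s_i = L/r_i, and let x be an R-multiplicity of r (i.e., L divides 1 + sum_i x_i r_i). Then there exist integers c_1,...,c_d and ρ_1,...,ρ_d with x_i = c_i s_i + ρ_i for all i, sum_i ρ_i r_i = -1, and each ρ_i satisfying -s_i ≤ ρ_i ≤ s_i - 1 (in fact ρ_i ∈ {0,...,s_i-1} or ρ_i ∈ {-s_i,...,-1}). -/
lemma card_filter_val_lt (d t : ℕ) (h : t ≤ d) :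
    (Finset.univ.filter (fun i : Fin d => (i : ℕ) < t)).card = t := by
  rcases eq_or_lt_of_le h with rfl | h
  · rw [Finset.filter_true_of_mem (fun i _ => i.isLt)]
    simp
  · have : Finset.univ.filter (fun i : Fin d => (i : ℕ) < t) = Finset.Iio ⟨t, h⟩ := by
      ext i
      simp [Fin.lt_def]
    rw [this, Fin.card_Iio]

theorem stmt_3 (d : ℕ) (hd : 0 < d) (r x : Fin d → ℕ)
    (hr : ∀ i, 0 < r i) (hx : ∀ i, 0 < x i)
    (hdiv : Finset.univ.lcm r ∣ 1 + ∑ i, x i * r i) :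
    ∃ (c ρ : Fin d → ℤ),
      (∀ i, (x i : ℤ) = c i * ((Finset.univ.lcm r / r i : ℕ) : ℤ) + ρ i) ∧
      (∑ i, ρ i * (r i : ℤ)) = -1 ∧
      (∀ i, (0 ≤ ρ i ∧ ρ i ≤ ((Finset.univ.lcm r / r i : ℕ) : ℤ) - 1) ∨
            (-((Finset.univ.lcm r / r i : ℕ) : ℤ) ≤ ρ i ∧ ρ i ≤ -1)) := by
  set L : ℕ := Finset.univ.lcm r with hLdef
  have hrL : ∀ i, r i ∣ L := fun i => Finset.dvd_lcm (Finset.mem_univ i)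
  have hLpos : 0 < L := Nat.pos_of_dvd_of_pos hdiv (by positivity)
  set s : Fin d → ℕ := fun i => L / r i with hsdef
  have hsr : ∀ i, s i * r i = L := fun i => Nat.div_mul_cancel (hrL i)
  have hspos : ∀ i, 0 < s i := fun i =>
    Nat.div_pos (Nat.le_of_dvd hLpos (hrL i)) (hr i)
  set q : Fin d → ℤ := fun i => (x i : ℤ) % (s i : ℤ) with hqdef
  have hq0 : ∀ i, 0 ≤ q i := fun i =>
    Int.emod_nonneg _ (by exact_mod_cast (hspos i).ne')
  have hq1 : ∀ i, q i < (s i : ℤ) := fun i =>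
    Int.emod_lt_of_pos _ (by exact_mod_cast hspos i)
  have hdvdq : ∀ i, (s i : ℤ) ∣ ((x i : ℤ) - q i) := fun i =>
    Int.dvd_self_sub_of_emod_eq rfl
  set S : ℤ := ∑ i, q i * (r i : ℤ) with hSdef
  -- L ∣ S + 1
  have hcong : (L : ℤ) ∣ S + 1 := by
    have h1 : (L : ℤ) ∣ (1 + ∑ i, (x i : ℤ) * (r i : ℤ)) := by
      have := Int.natCast_dvd_natCast.mpr hdiv
      push_cast at this
      convert this using 2
    have h2 : (L : ℤ) ∣ ∑ i, ((x i : ℤ) - q i) * (r i : ℤ) := by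
      apply Finset.dvd_sum
      intro i _
      obtain ⟨k, hk⟩ := hdvdq i
      refine ⟨k, ?_⟩
      rw [hk]
      rw [show (L : ℤ) = (s i : ℤ) * (r i : ℤ) by exact_mod_cast (hsr i).symm]
      ring
    have h3 : S + 1 = (1 + ∑ i, (x i : ℤ) * (r i : ℤ)) - ∑ i, ((x i : ℤ) - q i) * (r i : ℤ) := by
      rw [hSdef]
      simp only [sub_mul, Finset.sum_sub_distrib]
      ring
    rw [h3]
    exact dvd_sub h1 h2
  have hS0 : 0 ≤ S :=
    Finset.sum_nonneg fun i _ => mul_nonneg (hq0 i) (by positivity)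
  have hSlt : S < (d : ℤ) * L := by
    have hterm : ∀ i ∈ Finset.univ, q i * (r i : ℤ) ≤ (L : ℤ) - (r i : ℤ) := by
      intro i _
      have : q i ≤ (s i : ℤ) - 1 := by linarith [hq1 i]
      calc q i * (r i : ℤ) ≤ ((s i : ℤ) - 1) * (r i : ℤ) := by
            apply mul_le_mul_of_nonneg_right this (by positivity)
        _ = (s i : ℤ) * (r i : ℤ) - (r i : ℤ) := by ring
        _ = (L : ℤ) - (r i : ℤ) := by
            rw [show (s i : ℤ) * (r i : ℤ) = (L : ℤ) by exact_mod_cast hsr i]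
    calc S ≤ ∑ i : Fin d, ((L : ℤ) - (r i : ℤ)) := Finset.sum_le_sum hterm
      _ = (d : ℤ) * L - ∑ i, (r i : ℤ) := by
          rw [Finset.sum_sub_distrib, Finset.sum_const, Finset.card_univ,
            Fintype.card_fin, nsmul_eq_mul]
      _ < (d : ℤ) * L := by
          have : 0 < ∑ i, (r i : ℤ) := Finset.sum_pos (fun i _ => by exact_mod_cast hr i)
            (Finset.univ_nonempty_iff.mpr ⟨⟨0, hd⟩⟩)
          linarith
  obtain ⟨m, hm⟩ := hcong
  have hLZ : (0 : ℤ) < (L : ℤ) := by exact_mod_cast hLpos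
  have hm1 : 1 ≤ m := by
    by_contra h
    push_neg at h
    have : (L : ℤ) * m ≤ 0 := mul_nonpos_of_nonneg_of_nonpos hLZ.le (by omega)
    linarith
  have hmd : m ≤ (d : ℤ) := by
    by_contra h
    push_neg at h
    have : (d : ℤ) * L < m * L := mul_lt_mul_of_pos_right h hLZ
    nlinarith
  set t : ℕ := m.toNat with htdef
  have htd : t ≤ d := by omega
  have htm : (t : ℤ) = m := Int.toNat_of_nonneg (by omega)
  set ρ : Fin d → ℤ := fun i => q i - if (i : ℕ) < t then (s i : ℤ) else 0 with hρdef
  have hdvdρ : ∀ i, (s i : ℤ) ∣ ((x i : ℤ) - ρ i) := by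
    intro i
    simp only [hρdef]
    rcases lt_or_ge (i : ℕ) t with h | h
    · simp only [if_pos h]
      have : (x i : ℤ) - (q i - s i) = ((x i : ℤ) - q i) + s i := by ring
      rw [this]
      exact dvd_add (hdvdq i) dvd_rfl
    · simp only [if_neg (not_lt.mpr h), sub_zero]
      exact hdvdq i
  refine ⟨fun i => ((x i : ℤ) - ρ i) / (s i : ℤ), ρ, ?_, ?_, ?_⟩
  · intro i
    rw [Int.ediv_mul_cancel (hdvdρ i)]
    ring
  · have hsum : ∑ i, ρ i * (r i : ℤ)
        = S - ∑ i : Fin d, (if (i : ℕ) < t then (L : ℤ) else 0) := by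
      rw [hSdef, ← Finset.sum_sub_distrib]
      apply Finset.sum_congr rfl
      intro i _
      simp only [hρdef]
      rcases lt_or_ge (i : ℕ) t with h | h
      · simp only [if_pos h]
        rw [show (L : ℤ) = (s i : ℤ) * (r i : ℤ) by exact_mod_cast (hsr i).symm]
        ring
      · simp only [if_neg (not_lt.mpr h)]
        ring
    rw [hsum, ← Finset.sum_filter, Finset.sum_const,
      card_filter_val_lt d t htd, nsmul_eq_mul, htm]
    linarith [hm, mul_comm m ((L : ℤ))]
  · intro i
    simp only [hρdef]
    rcases lt_or_ge (i : ℕ) t with h | h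
    · right
      simp only [if_pos h]
      constructor
      · linarith [hq0 i]
      · linarith [hq1 i]
    · left
      simp only [if_neg (not_lt.mpr h), sub_zero]
      exact ⟨hq0 i, by linarith [hq1 i]⟩
end

section
/- Let a ≥ 2, k ≥ 1, c ≥ 1 be integers. Define the map φ from {0,...,ka-2} × {0,...,a-1} to itself sending (i_1, i_2) to (j_1, j_2) where j_1 = floor(((ka-1)·i_2 + i_1)/a) and j_2 = (ka-1)·i_2 + i_1 - a·j_1. Then φ is a bijection and for all (i_1, i_2) in the domain, c·i_1 + ((ka-1)c - k)·i_2 - floor((i_1 - i_2)/a) = (ac - 1)·j_1 + c·j_2. -/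
theorem stmt_9 (a k c : ℤ) (ha : 2 ≤ a) (hk : 1 ≤ k) (hc : 1 ≤ c) :
    Set.BijOn
      (fun p : ℤ × ℤ =>
        (Int.ediv ((k * a - 1) * p.2 + p.1) a,
         (k * a - 1) * p.2 + p.1 - a * Int.ediv ((k * a - 1) * p.2 + p.1) a))
      {p : ℤ × ℤ | 0 ≤ p.1 ∧ p.1 ≤ k * a - 2 ∧ 0 ≤ p.2 ∧ p.2 ≤ a - 1}
      {p : ℤ × ℤ | 0 ≤ p.1 ∧ p.1 ≤ k * a - 2 ∧ 0 ≤ p.2 ∧ p.2 ≤ a - 1} ∧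
    ∀ p : ℤ × ℤ, p ∈ {p : ℤ × ℤ | 0 ≤ p.1 ∧ p.1 ≤ k * a - 2 ∧ 0 ≤ p.2 ∧ p.2 ≤ a - 1} →
      c * p.1 + ((k * a - 1) * c - k) * p.2 - Int.ediv (p.1 - p.2) a =
        (a * c - 1) * Int.ediv ((k * a - 1) * p.2 + p.1) a +
          c * ((k * a - 1) * p.2 + p.1 - a * Int.ediv ((k * a - 1) * p.2 + p.1) a) := by
  have hED : ∀ x y : ℤ, Int.ediv x y = x / y := fun _ _ => rfl
  have ha0 : 0 < a := by omega
  have hm : 1 ≤ k * a - 1 := by nlinarith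
  constructor
  · refine ⟨?_, ?_, ?_⟩
    · -- MapsTo
      rintro ⟨i1, i2⟩ ⟨h1, h2, h3, h4⟩
      simp only [Set.mem_setOf_eq, hED] at *
      set n : ℤ := (k * a - 1) * i2 + i1 with hn
      have hn0 : 0 ≤ n := by nlinarith
      have hnlt : n < (k * a - 1) * a := by nlinarith
      have hq0 : 0 ≤ n / a := Int.ediv_nonneg hn0 ha0.le
      have hqlt : n / a < k * a - 1 := (Int.ediv_lt_iff_lt_mul ha0).2 hnlt
      have hr := Int.emod_nonneg n (by omega : a ≠ 0)
      have hr2 := Int.emod_lt_of_pos n ha0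
      have hmod : n % a = n - a * (n / a) := Int.emod_def n a
      exact ⟨hq0, by omega, by omega, by omega⟩
    · -- InjOn
      rintro ⟨i1, i2⟩ ⟨h1, h2, h3, h4⟩ ⟨i1', i2'⟩ ⟨h1', h2', h3', h4'⟩ heq
      simp only [Set.mem_setOf_eq, Prod.mk.injEq, hED] at *
      obtain ⟨e1, e2⟩ := heq
      rw [e1] at e2
      have hn : (k * a - 1) * i2 + i1 = (k * a - 1) * i2' + i1' := by omega
      have hd : (k * a - 1) * (i2 - i2') = i1' - i1 := by linear_combination hn
      have h22 : i2 = i2' := by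
        rcases lt_trichotomy i2 i2' with h | h | h
        · nlinarith
        · exact h
        · nlinarith
      have h11 : i1 = i1' := by rw [h22, sub_self, mul_zero] at hd; omega
      simp [h11, h22]
    · -- SurjOn
      rintro ⟨j1, j2⟩ ⟨g1, g2, g3, g4⟩
      simp only [Set.mem_setOf_eq] at g1 g2 g3 g4
      set m : ℤ := k * a - 1 with hmdef
      set n : ℤ := a * j1 + j2 with hn
      have hn0 : 0 ≤ n := by nlinarith
      have hnlt : n < a * m := by nlinarith
      have hi1r := Int.emod_nonneg n (by omega : m ≠ 0)
      have hi1r2 := Int.emod_lt_of_pos n (by omega : 0 < m)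
      have hi2q : 0 ≤ n / m := Int.ediv_nonneg hn0 (by omega)
      have hi2lt : n / m < a := (Int.ediv_lt_iff_lt_mul (by omega)).2 (by nlinarith)
      have hmod : n % m = n - m * (n / m) := Int.emod_def n m
      refine ⟨(n % m, n / m), ⟨hi1r, by omega, hi2q, by omega⟩, ?_⟩
      simp only [hED]
      have hrec : (k * a - 1) * (n / m) + n % m = n := by rw [← hmdef]; omega
      have hdiv2 : (a * j1 + j2) / a = j1 := by
        rw [show a * j1 + j2 = j2 + j1 * a by ring,
          Int.add_mul_ediv_right _ _ (by omega : a ≠ 0),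
          Int.ediv_eq_zero_of_lt g3 (by omega)]
        ring
      have hdiv : ((k * a - 1) * (n / m) + n % m) / a = j1 := by rw [hrec, hn]; exact hdiv2
      rw [Prod.ext_iff]
      refine ⟨hdiv, ?_⟩
      have hrec' : m * (n / m) + n % m = n := hrec
      have hdiv' : (m * (n / m) + n % m) / a = j1 := hdiv
      rw [hdiv']; linarith [hrec']
  · -- identity
    rintro ⟨i1, i2⟩ ⟨h1, h2, h3, h4⟩
    simp only [Set.mem_setOf_eq, hED] at *
    have key : ((k * a - 1) * i2 + i1) / a = (i1 - i2) / a + k * i2 := by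
      rw [show (k * a - 1) * i2 + i1 = (i1 - i2) + (k * i2) * a by ring]
      exact Int.add_mul_ediv_right _ _ (by omega)
    rw [key]; ring
end

section
/- Let a ≥ 2, k ≥ 1, c ≥ 1 be integers. Then the sum over all pairs (i_1, i_2) with 0 ≤ i_1 ≤ ka-2 and 0 ≤ i_2 ≤ a-1 of z^{c·i_1 + ((ka-1)c-k)·i_2 - floor((i_1-i_2)/a)} equals (sum_{j_1=0}^{ka-2} z^{(ac-1)·j_1})·(sum_{j_2=0}^{a-1} z^{c·j_2}) as polynomials in z. -/
lemma divmod_aux (k r m : ℤ) (h0 : 0 ≤ r) (h1 : r < k) :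
    (r + m * k) / k = m ∧ (r + m * k) % k = r := by
  have hk : k ≠ 0 := by omega
  constructor
  · rw [Int.add_mul_ediv_right _ _ hk, Int.ediv_eq_zero_of_lt h0 h1, zero_add]
  · rw [Int.add_mul_emod_self_right, Int.emod_eq_of_lt h0 h1]

open LaurentPolynomial in
theorem stmt_10 (a k c : ℤ) (ha : 2 ≤ a) (hk : 1 ≤ k) (hc : 1 ≤ c) :
    (∑ p ∈ Finset.Icc (0 : ℤ) (k * a - 2) ×ˢ Finset.Icc (0 : ℤ) (a - 1),
        (T (c * p.1 + ((k * a - 1) * c - k) * p.2 - Int.ediv (p.1 - p.2) a) :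
          LaurentPolynomial ℤ)) =
      (∑ j₁ ∈ Finset.Icc (0 : ℤ) (k * a - 2), T ((a * c - 1) * j₁)) *
        (∑ j₂ ∈ Finset.Icc (0 : ℤ) (a - 1), T (c * j₂)) := by
  have ha0 : (0:ℤ) < a := by omega
  have hk0 : (0:ℤ) < k := by omega
  have hE : ∀ x y : ℤ, Int.ediv x y = x / y := fun _ _ => rfl
  simp only [hE]
  rw [Finset.sum_mul_sum, ← Finset.sum_product']
  simp only [← T_add]
  refine Finset.sum_nbij'
    (i := fun p => (k * p.2 + (p.1 - p.2) / a, (p.1 - p.2) % a))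
    (j := fun p => if p.1 / k + a * (p.1 % k) + p.2 ≤ k * a - 2
        then (p.1 / k + a * (p.1 % k) + p.2, p.1 / k)
        else (p.1 / k + 1 + a * (p.1 % k - k) + p.2, p.1 / k + 1))
    ?_ ?_ ?_ ?_ ?_
  · rintro ⟨i₁, i₂⟩ hp
    simp only [Finset.mem_product, Finset.mem_Icc] at hp ⊢
    obtain ⟨⟨h1, h2⟩, h3, h4⟩ := hp
    set q := (i₁ - i₂) / a with hqdef
    set r := (i₁ - i₂) % a with hrdef
    have hq : a * q + r = i₁ - i₂ := Int.mul_ediv_add_emod _ _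
    have hr0 : 0 ≤ r := Int.emod_nonneg _ (by omega)
    have hra : r < a := Int.emod_lt_of_pos _ ha0
    have hq1 : -1 ≤ q := by nlinarith
    have hq2 : q ≤ k - 1 := by nlinarith
    refine ⟨⟨?_, ?_⟩, hr0, by omega⟩
    · rcases eq_or_lt_of_le h3 with h | h
      · have : 0 ≤ q := by nlinarith
        nlinarith
      · have : k * 1 ≤ k * i₂ := mul_le_mul_of_nonneg_left (by omega) (by omega)
        omega
    · rcases eq_or_lt_of_le hq2 with h | h
      · have hi2 : i₂ ≤ a - 2 := by nlinarith
        have : k * i₂ ≤ k * (a-2) := mul_le_mul_of_nonneg_left (by omega) (by omega)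
        nlinarith
      · have : k * i₂ ≤ k * (a-1) := mul_le_mul_of_nonneg_left (by omega) (by omega)
        nlinarith
  · rintro ⟨j₁, j₂⟩ hp
    simp only [Finset.mem_product, Finset.mem_Icc] at hp ⊢
    obtain ⟨⟨h1, h2⟩, h3, h4⟩ := hp
    set d := j₁ / k with hddef
    set r := j₁ % k with hrdef
    have hq : k * d + r = j₁ := Int.mul_ediv_add_emod _ _
    have hr0 : 0 ≤ r := Int.emod_nonneg _ (by omega)
    have hrk : r < k := Int.emod_lt_of_pos _ hk0
    have hd0 : 0 ≤ d := Int.ediv_nonneg h1 (by omega)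
    have hda : d ≤ a - 1 := by nlinarith
    have har0 : 0 ≤ a * r := mul_nonneg (by omega) hr0
    split_ifs with hcond
    · dsimp only
      exact ⟨⟨by linarith, hcond⟩, hd0, hda⟩
    · push_neg at hcond
      dsimp only
      have hd2 : d ≤ a - 2 := by
        by_contra h
        have hd : d = a - 1 := by omega
        rw [hd] at hcond
        have hrk1 : r = k - 1 := by
          by_contra hr
          have : a * r ≤ a * (k - 2) := mul_le_mul_of_nonneg_left (by omega) (by omega)
          linarith
        rw [hd, hrk1] at hq
        have : k * (a - 1) + (k - 1) = k * a - 1 := by ring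
        omega
      have har : a * r ≤ a * (k-1) := mul_le_mul_of_nonneg_left (by omega) (by omega)
      have hka : a ≤ k * a := by nlinarith
      refine ⟨⟨by linarith, by linarith⟩, by omega, by omega⟩
  · rintro ⟨i₁, i₂⟩ hp
    simp only [Finset.mem_product, Finset.mem_Icc] at hp
    obtain ⟨⟨h1, h2⟩, h3, h4⟩ := hp
    dsimp only
    set q := (i₁ - i₂) / a with hqdef
    set r := (i₁ - i₂) % a with hrdef
    have hq : a * q + r = i₁ - i₂ := Int.mul_ediv_add_emod _ _
    have hr0 : 0 ≤ r := Int.emod_nonneg _ (by omega)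
    have hra : r < a := Int.emod_lt_of_pos _ ha0
    have hq1 : -1 ≤ q := by nlinarith
    have hq2 : q ≤ k - 1 := by nlinarith
    rcases eq_or_lt_of_le hq1 with h | h
    · -- q = -1
      rw [← h] at hq
      have hrw : k * i₂ + q = (k - 1) + (i₂ - 1) * k := by linarith
      rw [hrw]
      obtain ⟨hd, hm⟩ := divmod_aux k (k-1) (i₂-1) (by omega) (by omega)
      rw [hd, hm]
      have hcond : ¬ (i₂ - 1 + a * (k - 1) + r ≤ k * a - 2) := by
        push_neg
        linarith
      rw [if_neg hcond]
      have hi1 : i₂ - 1 + 1 + a * (k - 1 - k) + r = i₁ := by linarith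
      rw [hi1]
      simp only [Prod.mk.injEq]
      exact ⟨trivial, by omega⟩
    · -- q ≥ 0
      have hq0 : 0 ≤ q := by omega
      have hrw : k * i₂ + q = q + i₂ * k := by ring
      rw [hrw]
      obtain ⟨hd, hm⟩ := divmod_aux k q i₂ hq0 (by omega)
      rw [hd, hm]
      have hcond : i₂ + a * q + r ≤ k * a - 2 := by linarith
      rw [if_pos hcond]
      simp only [Prod.mk.injEq]
      exact ⟨by linarith, trivial⟩
  · rintro ⟨j₁, j₂⟩ hp
    simp only [Finset.mem_product, Finset.mem_Icc] at hp
    obtain ⟨⟨h1, h2⟩, h3, h4⟩ := hp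
    set d := j₁ / k with hddef
    set r := j₁ % k with hrdef
    have hq : k * d + r = j₁ := Int.mul_ediv_add_emod _ _
    have hr0 : 0 ≤ r := Int.emod_nonneg _ (by omega)
    have hrk : r < k := Int.emod_lt_of_pos _ hk0
    dsimp only
    split_ifs with hcond
    · dsimp only
      have hsub : d + a * r + j₂ - d = j₂ + r * a := by ring
      rw [hsub]
      obtain ⟨hd', hm⟩ := divmod_aux a j₂ r h3 (by omega)
      rw [hd', hm]
      simp only [Prod.mk.injEq]
      exact ⟨by linarith, trivial⟩
    · dsimp only
      have hsub : d + 1 + a * (r - k) + j₂ - (d + 1) = j₂ + (r - k) * a := by ring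
      rw [hsub]
      obtain ⟨hd', hm⟩ := divmod_aux a j₂ (r - k) h3 (by omega)
      rw [hd', hm]
      simp only [Prod.mk.injEq]
      exact ⟨by linarith, trivial⟩
  · rintro ⟨i₁, i₂⟩ hp
    dsimp only
    have hq : a * ((i₁ - i₂) / a) + (i₁ - i₂) % a = i₁ - i₂ := Int.mul_ediv_add_emod _ _
    congr 1
    linear_combination (-c) * hq
end

section
/- For integers a ≥ 2 and c ≥ 1, the sum over pairs (i_1, i_2) with 0 ≤ i_2 ≤ i_1 ≤ a-2 of z^{c(i_1+i_2)} equals (sum_{j=0}^{2·floor((a-1)/2)} z^{cj})·(sum_{j=0}^{ceil((a-1)/2)-1} z^{2cj}). -/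
open LaurentPolynomial in
private lemma T_ne_one' {n : ℤ} (hn : n ≠ 0) : (T n : LaurentPolynomial ℤ) ≠ 1 := by
  intro h
  have h2 := congrArg degree h
  rw [degree_T, ← T_zero, degree_T] at h2
  exact hn (by exact_mod_cast h2)

open LaurentPolynomial in
private lemma geomT_nat (d : ℤ) (n : ℕ) :
    (∑ j ∈ Finset.Icc (0:ℤ) (n:ℤ), (T (d*j) : LaurentPolynomial ℤ)) * (T d - 1)
      = T (d*((n:ℤ)+1)) - 1 := by
  induction n with
  | zero => simp
  | succ n ih =>
      have hcast : ((n+1 : ℕ) : ℤ) = (n:ℤ) + 1 := by push_cast; ring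
      have hins : Finset.Icc (0:ℤ) ((n:ℤ)+1) = insert ((n:ℤ)+1) (Finset.Icc (0:ℤ) (n:ℤ)) := by
        ext x
        simp only [Finset.mem_Icc, Finset.mem_insert]
        omega
      have hnot : ((n:ℤ)+1) ∉ Finset.Icc (0:ℤ) (n:ℤ) := by
        simp only [Finset.mem_Icc]
        omega
      rw [hcast, hins, Finset.sum_insert hnot, add_comm, add_mul, ih]
      have h1 : (T (d*((n:ℤ)+1)) : LaurentPolynomial ℤ) * T d = T (d*((n:ℤ)+1+1)) := by
        rw [← T_add]; congr 1; ring
      linear_combination h1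

open LaurentPolynomial in
private lemma geomT (d n : ℤ) (hn : 0 ≤ n) :
    (∑ j ∈ Finset.Icc (0:ℤ) n, (T (d*j) : LaurentPolynomial ℤ)) * (T d - 1)
      = T (d*(n+1)) - 1 := by
  obtain ⟨m, rfl⟩ := Int.eq_ofNat_of_zero_le hn
  exact geomT_nat d m

open LaurentPolynomial in
theorem stmt_11 (a c : ℤ) (ha : 2 ≤ a) (hc : 1 ≤ c) :
    (∑ p ∈ (Finset.Icc (0 : ℤ) (a - 2) ×ˢ Finset.Icc (0 : ℤ) (a - 2)).filter
        (fun p => p.2 ≤ p.1),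
        (T (c * (p.1 + p.2)) : LaurentPolynomial ℤ)) =
      (∑ j ∈ Finset.Icc (0 : ℤ) (2 * Int.ediv (a - 1) 2), T (c * j)) *
        (∑ j ∈ Finset.Icc (0 : ℤ) (Int.ediv a 2 - 1), T (2 * c * j)) := by
  have hed : ∀ m : ℤ, Int.ediv m 2 = m / 2 := fun _ => rfl
  have hkey : ∀ x y : LaurentPolynomial ℤ,
      x * ((T c - 1) * (T (2*c) - 1)) = y * ((T c - 1) * (T (2*c) - 1)) → x = y := by
    intro x y h
    refine mul_right_cancel₀ (mul_ne_zero ?_ ?_) h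
    · exact sub_ne_zero.mpr (T_ne_one' (by omega))
    · exact sub_ne_zero.mpr (T_ne_one' (by omega))
  apply hkey
  -- LHS : unfold the filtered product sum into a double sum
  have hLHS1 : (∑ p ∈ (Finset.Icc (0 : ℤ) (a - 2) ×ˢ Finset.Icc (0 : ℤ) (a - 2)).filter
        (fun p => p.2 ≤ p.1), (T (c * (p.1 + p.2)) : LaurentPolynomial ℤ))
      = ∑ i ∈ Finset.Icc (0:ℤ) (a-2), ∑ j ∈ Finset.Icc (0:ℤ) i,
          (T (c * (i + j)) : LaurentPolynomial ℤ) := by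
    rw [Finset.sum_filter, Finset.sum_product]
    refine Finset.sum_congr rfl fun i hi => ?_
    rw [Finset.mem_Icc] at hi
    rw [← Finset.sum_filter]
    congr 1
    ext j
    simp only [Finset.mem_filter, Finset.mem_Icc]
    omega
  rw [hLHS1]
  set P := ∑ i ∈ Finset.Icc (0:ℤ) (a-2), (T ((2*c)*i) : LaurentPolynomial ℤ) with hPdef
  set Q := ∑ i ∈ Finset.Icc (0:ℤ) (a-2), (T (c*i) : LaurentPolynomial ℤ) with hQdef
  have hP : P * (T (2*c) - 1) = T ((2*c)*(a-1)) - 1 := by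
    rw [hPdef, geomT (2*c) (a-2) (by omega)]
    congr 2
    ring
  have hQ : Q * (T c - 1) = T (c*(a-1)) - 1 := by
    rw [hQdef, geomT c (a-2) (by omega)]
    congr 2
    ring
  have h2 : (T (2*c) : LaurentPolynomial ℤ) - 1 = (T c - 1) * (T c + 1) := by
    have h2' : (T c : LaurentPolynomial ℤ) * T c = T (2*c) := by
      rw [← T_add]; congr 1; ring
    linear_combination -h2'
  have hA : (T c : LaurentPolynomial ℤ) * T ((2*c)*(a-1)) = T (c*(2*a-1)) := by
    rw [← T_add]; congr 1; ring
  have hB : (T (c*(a-1)) : LaurentPolynomial ℤ) * T c = T (c*a) := by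
    rw [← T_add]; congr 1; ring
  have hL : (∑ i ∈ Finset.Icc (0:ℤ) (a-2), ∑ j ∈ Finset.Icc (0:ℤ) i,
          (T (c * (i + j)) : LaurentPolynomial ℤ)) * ((T c - 1) * (T (2*c) - 1))
      = T (c*(2*a-1)) - T (c*a) - T (c*(a-1)) + 1 := by
    have step1 : ∀ i ∈ Finset.Icc (0:ℤ) (a-2),
        (∑ j ∈ Finset.Icc (0:ℤ) i, (T (c * (i + j)) : LaurentPolynomial ℤ)) * (T c - 1)
          = T c * T ((2*c)*i) - T (c*i) := by
      intro i hi
      rw [Finset.mem_Icc] at hi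
      have hsplit : ∀ j ∈ Finset.Icc (0:ℤ) i, (T (c * (i + j)) : LaurentPolynomial ℤ)
          = T (c*i) * T (c*j) := by
        intro j _
        rw [← T_add]; congr 1; ring
      rw [Finset.sum_congr rfl hsplit, ← Finset.mul_sum, mul_assoc, geomT c i hi.1]
      have hc1 : (T (c*i) : LaurentPolynomial ℤ) * T (c*(i+1)) = T c * T ((2*c)*i) := by
        rw [← T_add, ← T_add]; congr 1; ring
      linear_combination hc1
    have step2 : (∑ i ∈ Finset.Icc (0:ℤ) (a-2), ∑ j ∈ Finset.Icc (0:ℤ) i,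
          (T (c * (i + j)) : LaurentPolynomial ℤ)) * (T c - 1)
        = T c * P - Q := by
      rw [Finset.sum_mul, Finset.sum_congr rfl step1, Finset.sum_sub_distrib,
        ← Finset.mul_sum]
    rw [← mul_assoc, step2]
    linear_combination (T c : LaurentPolynomial ℤ) * hP - Q * h2
      - ((T c : LaurentPolynomial ℤ) + 1) * hQ + hA - hB
  rw [hL]
  -- RHS
  have hR1 : (∑ j ∈ Finset.Icc (0 : ℤ) (2 * Int.ediv (a - 1) 2),
      (T (c * j) : LaurentPolynomial ℤ)) * (T c - 1)
      = T (c * (2 * Int.ediv (a-1) 2 + 1)) - 1 :=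
    geomT c _ (by simp only [hed]; omega)
  have hR2 : (∑ j ∈ Finset.Icc (0 : ℤ) (Int.ediv a 2 - 1),
      (T (2 * c * j) : LaurentPolynomial ℤ)) * (T (2*c) - 1)
      = T (2 * c * (Int.ediv a 2)) - 1 := by
    rw [geomT (2*c) (Int.ediv a 2 - 1) (by simp only [hed]; omega)]
    congr 2
    ring
  have hset : (T (c * (2 * Int.ediv (a-1) 2 + 1)) : LaurentPolynomial ℤ)
      + T (2 * c * (Int.ediv a 2)) = T (c*(a-1)) + T (c*a) := by
    rcases Int.even_or_odd a with ⟨k, hk⟩ | ⟨k, hk⟩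
    · have e1 : c * (2 * Int.ediv (a-1) 2 + 1) = c * (a-1) := by
        have e : Int.ediv (a-1) 2 = k - 1 := by simp only [hed]; omega
        rw [e, hk]; ring
      have e2 : 2 * c * (Int.ediv a 2) = c * a := by
        have e : Int.ediv a 2 = k := by simp only [hed]; omega
        rw [e, hk]; ring
      rw [e1, e2]
    · have e1 : c * (2 * Int.ediv (a-1) 2 + 1) = c * a := by
        have e : Int.ediv (a-1) 2 = k := by simp only [hed]; omega
        rw [e, hk]
      have e2 : 2 * c * (Int.ediv a 2) = c * (a-1) := by
        have e : Int.ediv a 2 = k := by simp only [hed]; omega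
        rw [e, hk]; ring
      rw [e1, e2, add_comm]
  have hsum : c * (2 * Int.ediv (a-1) 2 + 1) + 2 * c * (Int.ediv a 2) = c * (2*a-1) := by
    rcases Int.even_or_odd a with ⟨k, hk⟩ | ⟨k, hk⟩
    · have e1 : Int.ediv (a-1) 2 = k - 1 := by simp only [hed]; omega
      have e2 : Int.ediv a 2 = k := by simp only [hed]; omega
      rw [e1, e2, hk]; ring
    · have e1 : Int.ediv (a-1) 2 = k := by simp only [hed]; omega
      have e2 : Int.ediv a 2 = k := by simp only [hed]; omega
      rw [e1, e2, hk]; ring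
  have hprod : (T (c * (2 * Int.ediv (a-1) 2 + 1)) : LaurentPolynomial ℤ)
      * T (2 * c * (Int.ediv a 2)) = T (c*(2*a-1)) := by
    rw [← T_add, hsum]
  calc (T (c*(2*a-1)) - T (c*a) - T (c*(a-1)) + 1 : LaurentPolynomial ℤ)
      = (T (c * (2 * Int.ediv (a-1) 2 + 1)) - 1) * (T (2 * c * (Int.ediv a 2)) - 1) := by
        linear_combination -hprod + hset
    _ = ((∑ j ∈ Finset.Icc (0 : ℤ) (2 * Int.ediv (a - 1) 2), (T (c * j) : LaurentPolynomial ℤ)) *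
        (∑ j ∈ Finset.Icc (0 : ℤ) (Int.ediv a 2 - 1), T (2 * c * j))) *
          ((T c - 1) * (T (2*c) - 1)) := by
        rw [← hR1, ← hR2]; ring
end

section
/- Let a ≥ 2 and c ≥ 1 be integers. The sum over all pairs (i_1, i_2) with 0 ≤ i_1 ≤ a-2 and 0 ≤ i_2 ≤ a-1 of z^{c(i_1+i_2) - floor((i_1-i_2)/a)} equals (1 + z^{c+1})·(sum_{j=0}^{2·floor((a-1)/2)} z^{cj})·(sum_{j=0}^{ceil((a-1)/2)-1} z^{2cj}). -/
open LaurentPolynomial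

private lemma my_Icc_succ_top (a b : ℤ) (h : a ≤ b + 1) :
    Finset.Icc a (b + 1) = insert (b + 1) (Finset.Icc a b) := by
  ext x; simp only [Finset.mem_Icc, Finset.mem_insert]; omega

private lemma my_sum_Icc_succ_top {M : Type*} [AddCommMonoid M] {a b : ℤ} (h : a ≤ b + 1)
    (f : ℤ → M) :
    ∑ i ∈ Finset.Icc a (b + 1), f i = (∑ i ∈ Finset.Icc a b, f i) + f (b + 1) := by
  rw [my_Icc_succ_top a b h, Finset.sum_insert (by simp), add_comm]

private lemma run_even (c : ℤ) : ∀ m : ℤ, 0 ≤ m →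
    (∑ v ∈ Finset.Icc (0:ℤ) (2*m - 1), (T (c*v) : LaurentPolynomial ℤ)) =
      (1 + T c) * ∑ k ∈ Finset.Icc (0:ℤ) (m-1), T (2*c*k) := by
  intro m hm
  refine Int.le_induction (motive := fun m _ => (∑ v ∈ Finset.Icc (0:ℤ) (2*m - 1), (T (c*v) : LaurentPolynomial ℤ)) = (1 + T c) * ∑ k ∈ Finset.Icc (0:ℤ) (m-1), T (2*c*k)) ?_ ?_ m hm
  · beta_reduce
    rw [show (2*(0:ℤ) - 1) = -1 by ring, show ((0:ℤ) - 1) = -1 by ring,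
      Finset.Icc_eq_empty (by omega)]
    simp
  · intro m hm ih
    beta_reduce
    beta_reduce at ih
    have h1 : 2*(m+1) - 1 = (2*m) + 1 := by ring
    have h2 : (2*m : ℤ) = (2*m - 1) + 1 := by ring
    rw [h1, my_sum_Icc_succ_top (by omega), h2, my_sum_Icc_succ_top (by omega), ← h2, ih,
      show (m + 1) - 1 = (m - 1) + 1 by ring, my_sum_Icc_succ_top (by omega)]
    have e1 : c * (2*m) = 2*c*m := by ring
    have e2 : c * (2*m + 1) = c + 2*c*m := by ring
    have e3 : 2*c*(m-1+1) = 2*c*m := by ring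
    rw [e1, e2, e3, T_add]
    ring

private lemma triangle_eq (c : ℤ) : ∀ a : ℤ, 2 ≤ a →
    (∑ u ∈ Finset.Icc (0:ℤ) (a-2), ∑ v ∈ Finset.Icc (0:ℤ) u,
        (T (c*(u+v)) : LaurentPolynomial ℤ)) =
      (∑ j ∈ Finset.Icc (0:ℤ) (2 * ((a-1)/2)), T (c*j)) *
        (∑ k ∈ Finset.Icc (0:ℤ) (a/2 - 1), T (2*c*k)) := by
  intro a ha
  refine Int.le_induction (motive := fun a _ => (∑ u ∈ Finset.Icc (0:ℤ) (a-2), ∑ v ∈ Finset.Icc (0:ℤ) u, (T (c*(u+v)) : LaurentPolynomial ℤ)) = (∑ j ∈ Finset.Icc (0:ℤ) (2 * ((a-1)/2)), T (c*j)) * (∑ k ∈ Finset.Icc (0:ℤ) (a/2 - 1), T (2*c*k))) ?_ ?_ a ha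
  · beta_reduce
    norm_num
  · intro a ha ih
    beta_reduce
    beta_reduce at ih
    have hrow : ∀ s : ℤ, (∑ v ∈ Finset.Icc (0:ℤ) (a-1), (T (c*(s+v)) : LaurentPolynomial ℤ)) =
          T (c*s) * ∑ v ∈ Finset.Icc (0:ℤ) (a-1), T (c*v) := by
        intro s
        rw [Finset.mul_sum]
        refine Finset.sum_congr rfl fun v _ => ?_
        rw [← T_add]; congr 1; ring
    rw [show a + 1 - 2 = (a - 2) + 1 by ring, my_sum_Icc_succ_top (by omega), ih,
      show a - 2 + 1 = a - 1 by ring, hrow (a-1)]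
    rcases Int.even_or_odd a with ⟨m, hm⟩ | ⟨m, hm⟩
    · -- a = 2m
      have hm1 : 1 ≤ m := by omega
      have d1 : (a - 1)/2 = m - 1 := by omega
      have d2 : a/2 = m := by omega
      have d3 : (a + 1 - 1)/2 = m := by omega
      have d4 : (a + 1)/2 = m := by omega
      rw [d1, d2, d3, d4]
      have hrun : (∑ v ∈ Finset.Icc (0:ℤ) (a-1), (T (c*v) : LaurentPolynomial ℤ)) =
          (1 + T c) * ∑ k ∈ Finset.Icc (0:ℤ) (m-1), T (2*c*k) := by
        rw [show a - 1 = 2*m - 1 by omega]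
        exact run_even c m (by omega)
      rw [hrun,
        show (2*m : ℤ) = (2*m - 1) + 1 by ring, my_sum_Icc_succ_top (by omega),
        show (2*m - 1 : ℤ) = (2*(m-1)) + 1 by ring, my_sum_Icc_succ_top (by omega)]
      have e1 : c * (a - 1) = c * (2*(m-1) + 1) := by rw [hm]; ring
      have e2 : (T (c * (2*(m-1) + 1 + 1)) : LaurentPolynomial ℤ) =
          T (c * (2*(m-1) + 1)) * T c := by rw [← T_add]; congr 1; ring
      rw [e1, e2]
      ring
    · -- a = 2m+1
      have hm1 : 1 ≤ m := by omega
      have d1 : (a - 1)/2 = m := by omega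
      have d2 : a/2 = m := by omega
      have d3 : (a + 1 - 1)/2 = m := by omega
      have d4 : (a + 1)/2 = m + 1 := by omega
      rw [d1, d2, d3, d4,
        show (m + 1 - 1 : ℤ) = (m - 1) + 1 by ring, my_sum_Icc_succ_top (by omega)]
      have e1 : (T (c * (a - 1)) : LaurentPolynomial ℤ) = T (2*c*(m-1+1)) := by
        congr 1; rw [hm]; ring
      rw [e1, show a - 1 = 2*m by omega]
      ring

open LaurentPolynomial in
theorem stmt_12 (a c : ℤ) (ha : 2 ≤ a) (hc : 1 ≤ c) :
    (∑ p ∈ Finset.Icc (0 : ℤ) (a - 2) ×ˢ Finset.Icc (0 : ℤ) (a - 1),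
        (T (c * (p.1 + p.2) - Int.ediv (p.1 - p.2) a) : LaurentPolynomial ℤ)) =
      (1 + T (c + 1)) *
        (∑ j ∈ Finset.Icc (0 : ℤ) (2 * Int.ediv (a - 1) 2), T (c * j)) *
          (∑ j ∈ Finset.Icc (0 : ℤ) (Int.ediv a 2 - 1), T (2 * c * j)) := by
  set S := Finset.Icc (0 : ℤ) (a - 2) ×ˢ Finset.Icc (0 : ℤ) (a - 1) with hS
  have hmem : ∀ p ∈ S, 0 ≤ p.1 ∧ p.1 ≤ a - 2 ∧ 0 ≤ p.2 ∧ p.2 ≤ a - 1 := by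
    intro p hp
    simp only [hS, Finset.mem_product, Finset.mem_Icc] at hp
    tauto
  have hdiv : ∀ p ∈ S, Int.ediv (p.1 - p.2) a = if p.1 < p.2 then -1 else 0 := by
    intro p hp
    obtain ⟨h1, h2, h3, h4⟩ := hmem p hp
    split
    · next h =>
        have : p.1 - p.2 = (p.1 - p.2 + a) + (-1) * a := by ring
        rw [show Int.ediv (p.1 - p.2) a = (p.1 - p.2) / a from rfl, this,
          Int.add_mul_ediv_right _ _ (by omega), Int.ediv_eq_zero_of_lt (by omega) (by omega)]
        norm_num
    · next h =>
        exact Int.ediv_eq_zero_of_lt (by omega) (by omega)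
  have hsplit : (∑ p ∈ S, (T (c * (p.1 + p.2) - Int.ediv (p.1 - p.2) a) : LaurentPolynomial ℤ)) =
      (∑ p ∈ S.filter (fun p => p.1 < p.2), (T (c * (p.1 + p.2) + 1) : LaurentPolynomial ℤ)) +
      (∑ p ∈ S.filter (fun p => ¬ p.1 < p.2), (T (c * (p.1 + p.2)) : LaurentPolynomial ℤ)) := by
    rw [← Finset.sum_filter_add_sum_filter_not S (fun p => p.1 < p.2)]
    congr 1
    · refine Finset.sum_congr rfl fun p hp => ?_
      rw [hdiv p (Finset.mem_filter.mp hp).1, if_pos (Finset.mem_filter.mp hp).2]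
      congr 1 <;> ring
    · refine Finset.sum_congr rfl fun p hp => ?_
      rw [hdiv p (Finset.mem_filter.mp hp).1, if_neg (Finset.mem_filter.mp hp).2]
      congr 1 <;> ring
  have hbij : (∑ p ∈ S.filter (fun p => p.1 < p.2),
        (T (c * (p.1 + p.2) + 1) : LaurentPolynomial ℤ)) =
      ∑ p ∈ S.filter (fun p => ¬ p.1 < p.2),
        (T (c + 1) * T (c * (p.1 + p.2)) : LaurentPolynomial ℤ) := by
    refine Finset.sum_nbij' (fun p => (p.2 - 1, p.1)) (fun p => (p.2, p.1 + 1)) ?_ ?_ ?_ ?_ ?_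
    · intro p hp
      obtain ⟨hps, hlt⟩ := Finset.mem_filter.mp hp
      obtain ⟨h1, h2, h3, h4⟩ := hmem p hps
      simp only [hS, Finset.mem_filter, Finset.mem_product, Finset.mem_Icc, not_lt]
      omega
    · intro p hp
      obtain ⟨hps, hlt⟩ := Finset.mem_filter.mp hp
      obtain ⟨h1, h2, h3, h4⟩ := hmem p hps
      simp only [not_lt] at hlt
      simp only [hS, Finset.mem_filter, Finset.mem_product, Finset.mem_Icc, not_lt]
      omega
    · intro p _; simp
    · intro p _; simp
    · intro p hp
      rw [← T_add]
      congr 1; ring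
  have htri : (∑ p ∈ S.filter (fun p => ¬ p.1 < p.2),
        (T (c * (p.1 + p.2)) : LaurentPolynomial ℤ)) =
      ∑ u ∈ Finset.Icc (0:ℤ) (a-2), ∑ v ∈ Finset.Icc (0:ℤ) u,
        (T (c*(u+v)) : LaurentPolynomial ℤ) := by
    rw [Finset.sum_filter, hS, Finset.sum_product]
    refine Finset.sum_congr rfl fun u hu => ?_
    simp only [Finset.mem_Icc] at hu
    rw [← Finset.sum_filter]
    congr 1
    ext v
    simp only [Finset.mem_filter, Finset.mem_Icc, not_lt]
    omega
  rw [hsplit, hbij, ← Finset.mul_sum, htri, triangle_eq c a ha]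
  simp only [show ∀ x y : ℤ, Int.ediv x y = x / y from fun _ _ => rfl]
  ring
end

section
/- Let a ≥ 2 and c ≥ 1 be integers. The sum over all pairs (i_1, i_2) with 0 ≤ i_1 ≤ a²-2 and 0 ≤ i_2 ≤ a-1 of z^{c·i_1 + (ac-1)·i_2 - floor((i_1-i_2)/a)} equals (sum_{j_1=0}^{a-1} z^{(ac-1)j_1})·(sum_{j_2=0}^{a} z^{c·j_2})·(sum_{j_3=0}^{a-2} z^{(ac+c-1)j_3}). -/
private lemma ediv13 {a : ℤ} (ha : 0 < a) (q : ℤ) {r : ℤ} (h0 : 0 ≤ r) (h1 : r < a) :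
    (a * q + r) / a = q := by
  rw [add_comm, Int.add_mul_ediv_left r q ha.ne', Int.ediv_eq_zero_of_lt h0 h1, zero_add]

private lemma emod13 {a : ℤ} (ha : 0 < a) (q : ℤ) {r : ℤ} (h0 : 0 ≤ r) (h1 : r < a) :
    (a * q + r) % a = r := by
  rw [add_comm, Int.add_mul_emod_self_left, Int.emod_eq_of_lt h0 h1]

private def phi13 (a : ℤ) (p : ℤ × ℤ) : ℤ × ℤ × ℤ :=
  if p.1 < p.2 then (p.2 - p.1 - 1, a, p.1)
  else if a * (a - 1) ≤ p.1 - p.2 then (a - 1, (p.1 - p.2) % a, p.2)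
  else if p.2 ≤ a - 2 then ((p.1 - p.2) / a, (p.1 - p.2) % a, p.2)
  else if (p.1 - p.2) / a < (p.1 - p.2) % a then
    ((p.1 - p.2) / a - (p.1 - p.2) % a + a, a, (p.1 - p.2) % a - 1)
  else (a - 1, (p.1 - p.2) % a - (p.1 - p.2) / a + a - 1, (p.1 - p.2) / a)

private def psi13 (a : ℤ) (q : ℤ × ℤ × ℤ) : ℤ × ℤ :=
  if q.2.1 = a then
    (if q.1 + q.2.2 ≤ a - 2 then (q.2.2, q.1 + q.2.2 + 1)
     else (a * (q.1 + q.2.2 + 1 - a) + q.2.2 + a, a - 1))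
  else if q.1 ≤ a - 2 then (a * q.1 + q.2.1 + q.2.2, q.2.2)
  else if q.2.1 + q.2.2 ≤ a - 2 then (a * (a - 1) + q.2.1 + q.2.2, q.2.2)
  else (a * q.2.2 + q.2.1 + q.2.2, a - 1)

private lemma phi13_eval (a i₁ i₂ : ℤ) :
    phi13 a (i₁, i₂) =
      if i₁ < i₂ then (i₂ - i₁ - 1, a, i₁)
      else if a * (a - 1) ≤ i₁ - i₂ then (a - 1, (i₁ - i₂) % a, i₂)
      else if i₂ ≤ a - 2 then ((i₁ - i₂) / a, (i₁ - i₂) % a, i₂)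
      else if (i₁ - i₂) / a < (i₁ - i₂) % a then
        ((i₁ - i₂) / a - (i₁ - i₂) % a + a, a, (i₁ - i₂) % a - 1)
      else (a - 1, (i₁ - i₂) % a - (i₁ - i₂) / a + a - 1, (i₁ - i₂) / a) := rfl

private lemma psi13_eval (a j₁ j₂ j₃ : ℤ) :
    psi13 a (j₁, j₂, j₃) =
      if j₂ = a then
        (if j₁ + j₃ ≤ a - 2 then (j₃, j₁ + j₃ + 1)
         else (a * (j₁ + j₃ + 1 - a) + j₃ + a, a - 1))
      else if j₁ ≤ a - 2 then (a * j₁ + j₂ + j₃, j₃)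
      else if j₂ + j₃ ≤ a - 2 then (a * (a - 1) + j₂ + j₃, j₃)
      else (a * j₃ + j₂ + j₃, a - 1) := rfl

open LaurentPolynomial in
private lemma aux13 (a c : ℤ) (ha : 2 ≤ a) :
    (∑ p ∈ Finset.Icc (0 : ℤ) (a ^ 2 - 2) ×ˢ Finset.Icc (0 : ℤ) (a - 1),
        (T (c * p.1 + (a * c - 1) * p.2 - Int.ediv (p.1 - p.2) a) :
          LaurentPolynomial ℤ)) =
    ∑ q ∈ Finset.Icc (0 : ℤ) (a - 1) ×ˢ (Finset.Icc (0 : ℤ) a ×ˢ Finset.Icc (0 : ℤ) (a - 2)),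
      T ((a * c - 1) * q.1 + c * q.2.1 + (a * c + c - 1) * q.2.2) := by
  have ha0 : (0 : ℤ) < a := by linarith
  have hsq : a ^ 2 = a * a := sq a
  have hE1 : a * (a - 1) = a * a - a := by ring
  have hE1' : (a - 1) * a = a * a - a := by ring
  have hE2 : a * (a - 2) = a * a - 2 * a := by ring
  refine Finset.sum_nbij' (phi13 a) (psi13 a) ?_ ?_ ?_ ?_ ?_
  · -- 1) phi maps into target
    rintro ⟨i₁, i₂⟩ hp
    simp only [Finset.mem_product, Finset.mem_Icc] at hp
    obtain ⟨⟨h1, h2⟩, h3, h4⟩ := hp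
    rw [hsq] at h2
    have hms : a * ((i₁ - i₂) / a) + (i₁ - i₂) % a = i₁ - i₂ := Int.mul_ediv_add_emod _ a
    have hs0 : 0 ≤ (i₁ - i₂) % a := Int.emod_nonneg _ ha0.ne'
    have hs1 : (i₁ - i₂) % a < a := Int.emod_lt_of_pos _ ha0
    rw [phi13_eval]
    split_ifs with c1 c2 c3 c4 <;>
      simp only [Finset.mem_product, Finset.mem_Icc]
    · omega
    · -- B : m = a - 1
      have hmge : a - 1 ≤ (i₁ - i₂) / a :=
        (Int.le_ediv_iff_mul_le ha0).mpr (by linarith)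
      have hmlt : (i₁ - i₂) / a < a :=
        (Int.ediv_lt_iff_lt_mul ha0).mpr (by linarith)
      have hmeq : (i₁ - i₂) / a = a - 1 := by omega
      have hkey : a * a - a + (i₁ - i₂) % a = i₁ - i₂ := by
        rw [hmeq] at hms; linarith
      refine ⟨⟨by omega, by omega⟩, ⟨by omega, by omega⟩, by omega, by linarith⟩
    all_goals
      have hm0 : 0 ≤ (i₁ - i₂) / a := Int.ediv_nonneg (by omega) ha0.le
    all_goals
      have hm2 : (i₁ - i₂) / a < a - 1 :=
        (Int.ediv_lt_iff_lt_mul ha0).mpr (by linarith [not_le.mp c2])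
    · omega
    · omega
    · omega
  · -- 2) psi maps into source
    rintro ⟨j₁, j₂, j₃⟩ hq
    simp only [Finset.mem_product, Finset.mem_Icc] at hq
    obtain ⟨⟨k1, k2⟩, ⟨k3, k4⟩, k5, k6⟩ := hq
    rw [psi13_eval]
    split_ifs with b1 b2 b3 b4 <;>
      simp only [Finset.mem_product, Finset.mem_Icc] <;> rw [hsq]
    · have q1 : (0:ℤ) ≤ a * (a - 1) := mul_nonneg ha0.le (by omega)
      exact ⟨⟨by omega, by linarith⟩, by omega, by omega⟩
    · have p1 : 0 ≤ a * (j₁ + j₃ + 1 - a) := mul_nonneg ha0.le (by omega)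
      have p2 : a * (j₁ + j₃ + 1 - a) ≤ a * (a - 2) :=
        mul_le_mul_of_nonneg_left (by omega) ha0.le
      exact ⟨⟨by linarith, by linarith⟩, by omega, by omega⟩
    · have p1 : 0 ≤ a * j₁ := mul_nonneg ha0.le k1
      have p2 : a * j₁ ≤ a * (a - 2) := mul_le_mul_of_nonneg_left (by omega) ha0.le
      exact ⟨⟨by linarith, by linarith⟩, by omega, by omega⟩
    · have p1 : (0:ℤ) ≤ a * (a - 1) := mul_nonneg ha0.le (by omega)
      exact ⟨⟨by linarith, by linarith⟩, by omega, by omega⟩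
    · have p1 : 0 ≤ a * j₃ := mul_nonneg ha0.le k5
      have p2 : a * j₃ ≤ a * (a - 2) := mul_le_mul_of_nonneg_left k6 ha0.le
      exact ⟨⟨by linarith, by linarith⟩, by omega, by omega⟩
  · -- 3) psi ∘ phi = id
    rintro ⟨i₁, i₂⟩ hp
    simp only [Finset.mem_product, Finset.mem_Icc] at hp
    obtain ⟨⟨h1, h2⟩, h3, h4⟩ := hp
    rw [hsq] at h2
    have hms : a * ((i₁ - i₂) / a) + (i₁ - i₂) % a = i₁ - i₂ := Int.mul_ediv_add_emod _ a
    have hs0 : 0 ≤ (i₁ - i₂) % a := Int.emod_nonneg _ ha0.ne'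
    have hs1 : (i₁ - i₂) % a < a := Int.emod_lt_of_pos _ ha0
    rw [phi13_eval]
    split_ifs with c1 c2 c3 c4
    · -- A
      rw [psi13_eval, if_pos rfl, if_pos (by omega), Prod.mk.injEq]
      exact ⟨rfl, by omega⟩
    · -- B
      have hmge : a - 1 ≤ (i₁ - i₂) / a :=
        (Int.le_ediv_iff_mul_le ha0).mpr (by linarith)
      have hmlt : (i₁ - i₂) / a < a :=
        (Int.ediv_lt_iff_lt_mul ha0).mpr (by linarith)
      have hmeq : (i₁ - i₂) / a = a - 1 := by omega
      have hkey : a * a - a + (i₁ - i₂) % a = i₁ - i₂ := by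
        rw [hmeq] at hms; linarith
      rw [psi13_eval, if_neg (by omega), if_neg (by omega), if_pos (by linarith),
        Prod.mk.injEq]
      exact ⟨by linarith, rfl⟩
    all_goals
      have hm0 : 0 ≤ (i₁ - i₂) / a := Int.ediv_nonneg (by omega) ha0.le
    all_goals
      have hm2 : (i₁ - i₂) / a < a - 1 :=
        (Int.ediv_lt_iff_lt_mul ha0).mpr (by linarith [not_le.mp c2])
    · -- C
      rw [psi13_eval, if_neg (by omega), if_pos (by omega), Prod.mk.injEq]
      exact ⟨by linarith, rfl⟩
    · -- D1
      have hi2 : i₂ = a - 1 := by omega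
      rw [psi13_eval, if_pos rfl, if_neg (by omega), Prod.mk.injEq]
      exact ⟨by linear_combination hms - hi2, by omega⟩
    · -- D2
      have hi2 : i₂ = a - 1 := by omega
      rw [psi13_eval, if_neg (by omega), if_neg (by omega), if_neg (by omega), Prod.mk.injEq]
      exact ⟨by linear_combination hms - hi2, by omega⟩
  · -- 4) phi ∘ psi = id
    rintro ⟨j₁, j₂, j₃⟩ hq
    simp only [Finset.mem_product, Finset.mem_Icc] at hq
    obtain ⟨⟨k1, k2⟩, ⟨k3, k4⟩, k5, k6⟩ := hq
    rw [psi13_eval]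
    split_ifs with b1 b2 b3 b4
    · -- psi-A
      rw [phi13_eval, if_pos (by omega), Prod.mk.injEq, Prod.mk.injEq]
      exact ⟨by omega, by omega, rfl⟩
    · -- psi-D1
      have p1 : 0 ≤ a * (j₁ + j₃ + 1 - a) := mul_nonneg ha0.le (by omega)
      have p2 : a * (j₁ + j₃ + 1 - a) ≤ a * (a - 2) :=
        mul_le_mul_of_nonneg_left (by omega) ha0.le
      have e1 : (a * (j₁ + j₃ + 1 - a) + j₃ + a - (a - 1)) / a = j₁ + j₃ + 1 - a := by
        rw [show a * (j₁ + j₃ + 1 - a) + j₃ + a - (a - 1)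
            = a * (j₁ + j₃ + 1 - a) + (j₃ + 1) by ring]
        exact ediv13 ha0 _ (by omega) (by omega)
      have e2 : (a * (j₁ + j₃ + 1 - a) + j₃ + a - (a - 1)) % a = j₃ + 1 := by
        rw [show a * (j₁ + j₃ + 1 - a) + j₃ + a - (a - 1)
            = a * (j₁ + j₃ + 1 - a) + (j₃ + 1) by ring]
        exact emod13 ha0 _ (by omega) (by omega)
      rw [phi13_eval]
      simp only [e1, e2]
      rw [if_neg (by linarith), if_neg (by linarith), if_neg (by omega), if_pos (by omega),
        Prod.mk.injEq, Prod.mk.injEq]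
      exact ⟨by omega, by omega, by omega⟩
    · -- psi-C
      have k4' : j₂ ≤ a - 1 := by omega
      have p1 : 0 ≤ a * j₁ := mul_nonneg ha0.le k1
      have p2 : a * j₁ ≤ a * (a - 2) := mul_le_mul_of_nonneg_left (by omega) ha0.le
      have e1 : (a * j₁ + j₂ + j₃ - j₃) / a = j₁ := by
        rw [show a * j₁ + j₂ + j₃ - j₃ = a * j₁ + j₂ by ring]
        exact ediv13 ha0 _ k3 (by omega)
      have e2 : (a * j₁ + j₂ + j₃ - j₃) % a = j₂ := by
        rw [show a * j₁ + j₂ + j₃ - j₃ = a * j₁ + j₂ by ring]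
        exact emod13 ha0 _ k3 (by omega)
      rw [phi13_eval]
      simp only [e1, e2]
      rw [if_neg (by linarith), if_neg (by linarith), if_pos (by omega)]
    · -- psi-B
      have p1 : (0:ℤ) ≤ a * (a - 1) := mul_nonneg ha0.le (by omega)
      have e2 : (a * (a - 1) + j₂ + j₃ - j₃) % a = j₂ := by
        rw [show a * (a - 1) + j₂ + j₃ - j₃ = a * (a - 1) + j₂ by ring]
        exact emod13 ha0 _ k3 (by omega)
      rw [phi13_eval]
      simp only [e2]
      rw [if_neg (by linarith), if_pos (by linarith), Prod.mk.injEq, Prod.mk.injEq]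
      exact ⟨by omega, rfl, rfl⟩
    · -- psi-D2
      have k4' : j₂ ≤ a - 1 := by omega
      have p1 : 0 ≤ a * j₃ := mul_nonneg ha0.le k5
      have p2 : a * j₃ ≤ a * (a - 2) := mul_le_mul_of_nonneg_left k6 ha0.le
      have e1 : (a * j₃ + j₂ + j₃ - (a - 1)) / a = j₃ := by
        rw [show a * j₃ + j₂ + j₃ - (a - 1) = a * j₃ + (j₂ + j₃ + 1 - a) by ring]
        exact ediv13 ha0 _ (by omega) (by omega)
      have e2 : (a * j₃ + j₂ + j₃ - (a - 1)) % a = j₂ + j₃ + 1 - a := by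
        rw [show a * j₃ + j₂ + j₃ - (a - 1) = a * j₃ + (j₂ + j₃ + 1 - a) by ring]
        exact emod13 ha0 _ (by omega) (by omega)
      rw [phi13_eval]
      simp only [e1, e2]
      rw [if_neg (by linarith), if_neg (by linarith), if_neg (by omega), if_neg (by omega),
        Prod.mk.injEq, Prod.mk.injEq]
      exact ⟨by omega, by omega, rfl⟩
  · -- 5) exponents match
    rintro ⟨i₁, i₂⟩ hp
    simp only [Finset.mem_product, Finset.mem_Icc] at hp
    obtain ⟨⟨h1, h2⟩, h3, h4⟩ := hp
    rw [hsq] at h2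
    have hms : a * ((i₁ - i₂) / a) + (i₁ - i₂) % a = i₁ - i₂ := Int.mul_ediv_add_emod _ a
    have hs0 : 0 ≤ (i₁ - i₂) % a := Int.emod_nonneg _ ha0.ne'
    have hs1 : (i₁ - i₂) % a < a := Int.emod_lt_of_pos _ ha0
    have hdiv : Int.ediv (i₁ - i₂) a = (i₁ - i₂) / a := rfl
    rw [phi13_eval, hdiv]
    split_ifs with c1 c2 c3 c4 <;> dsimp only <;> congr 1
    · have e1 : (i₁ - i₂) / a = -1 := by
        rw [show i₁ - i₂ = a * (-1) + (i₁ - i₂ + a) by ring]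
        exact ediv13 ha0 _ (by omega) (by omega)
      rw [e1]; ring
    · -- B
      have hmge : a - 1 ≤ (i₁ - i₂) / a :=
        (Int.le_ediv_iff_mul_le ha0).mpr (by linarith)
      have hmlt : (i₁ - i₂) / a < a :=
        (Int.ediv_lt_iff_lt_mul ha0).mpr (by linarith)
      have hmeq : (i₁ - i₂) / a = a - 1 := by omega
      linear_combination (-c) * hms + (a * c - 1) * hmeq
    · linear_combination (-c) * hms
    · have hi2 : i₂ = a - 1 := by omega
      linear_combination (-c) * hms + (a * c + c - 1) * hi2
    · have hi2 : i₂ = a - 1 := by omega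
      linear_combination (-c) * hms + (a * c + c - 1) * hi2

open LaurentPolynomial in
theorem stmt_13 (a c : ℤ) (ha : 2 ≤ a) (hc : 1 ≤ c) :
    (∑ p ∈ Finset.Icc (0 : ℤ) (a ^ 2 - 2) ×ˢ Finset.Icc (0 : ℤ) (a - 1),
        (T (c * p.1 + (a * c - 1) * p.2 - Int.ediv (p.1 - p.2) a) :
          LaurentPolynomial ℤ)) =
      (∑ j₁ ∈ Finset.Icc (0 : ℤ) (a - 1), T ((a * c - 1) * j₁)) *
        (∑ j₂ ∈ Finset.Icc (0 : ℤ) a, T (c * j₂)) *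
          (∑ j₃ ∈ Finset.Icc (0 : ℤ) (a - 2), T ((a * c + c - 1) * j₃)) := by
  rw [aux13 a c ha, Finset.sum_product]
  simp only [Finset.sum_product]
  conv_rhs => rw [Finset.sum_mul_sum, Finset.sum_mul_sum]
  simp only [Finset.sum_mul]
  refine Finset.sum_congr rfl fun j₁ _ => ?_
  rw [Finset.sum_comm]
  refine Finset.sum_congr rfl fun j₃ _ => ?_
  refine Finset.sum_congr rfl fun j₂ _ => ?_
  rw [T_add, T_add]
end

section
/- Suppose a polynomial f(z) with non-negative integer coefficients factors as a product of geometric series f(z) = ∏_{j=1}^p (1 + z^{e_j} + z^{2e_j} + ... + z^{(γ_j - 1)e_j}) with e_j ≥ 1 and γ_j ≥ 2. Then for any j and any integer e ≥ e_j, the coefficients satisfy [z^{e - e_j}]f + [z^{e + e_j}]f ≥ [z^e]f. -/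
open Polynomial Finset

private lemma mul_coeff_nonneg18 {p q : Polynomial ℤ} (hp : ∀ n, 0 ≤ p.coeff n)
    (hq : ∀ n, 0 ≤ q.coeff n) : ∀ n, 0 ≤ (p * q).coeff n := by
  intro n
  rw [Polynomial.coeff_mul]
  exact Finset.sum_nonneg fun x _ => mul_nonneg (hp _) (hq _)

theorem stmt_18 (p : ℕ) (e γ : Fin p → ℕ)
    (he : ∀ j, 1 ≤ e j) (hγ : ∀ j, 2 ≤ γ j)
    (f : Polynomial ℤ)
    (hf : f = ∏ j, ∑ i ∈ Finset.range (γ j), (Polynomial.X : Polynomial ℤ) ^ (i * e j)) :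
    ∀ (j : Fin p) (e' : ℕ), e j ≤ e' →
      f.coeff e' ≤ f.coeff (e' - e j) + f.coeff (e' + e j) := by
  intro j e' hde
  classical
  set d := e j with hd
  set γj := γ j with hγjdef
  have hγ2 : 2 ≤ γj := hγ j
  set g : Polynomial ℤ :=
    ∏ j' ∈ Finset.univ.erase j, ∑ i ∈ Finset.range (γ j'), (Polynomial.X : Polynomial ℤ) ^ (i * e j')
    with hgdef
  have hfg : f = (∑ i ∈ Finset.range γj, (Polynomial.X : Polynomial ℤ) ^ (i * d)) * g := by
    rw [hf, hgdef, ← Finset.mul_prod_erase _ _ (Finset.mem_univ j)]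
  have hgn : ∀ n, 0 ≤ g.coeff n := by
    rw [hgdef]
    refine Finset.prod_induction _ (fun q : Polynomial ℤ => ∀ n, 0 ≤ q.coeff n)
      (fun a b ha hb => mul_coeff_nonneg18 ha hb) ?_ ?_
    · intro n
      rw [Polynomial.coeff_one]
      split <;> norm_num
    · intro j' _ n
      rw [Polynomial.finset_sum_coeff]
      apply Finset.sum_nonneg
      intro i _
      rw [Polynomial.coeff_X_pow]
      split <;> norm_num
  have key : ∀ t, f.coeff t =
      ∑ i ∈ Finset.range γj, (if i * d ≤ t then g.coeff (t - i * d) else 0) := by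
    intro t
    rw [hfg, Finset.sum_mul, Polynomial.finset_sum_coeff]
    apply Finset.sum_congr rfl
    intro i _
    rw [mul_comm, Polynomial.coeff_mul_X_pow']
  -- U i : terms of f.coeff e'
  set U : ℕ → ℤ := fun i => if i * d ≤ e' then g.coeff (e' - i * d) else 0 with hU
  have hγsplit : γj = (γj - 1) + 1 := by omega
  have h1 : f.coeff e' = (∑ i ∈ Finset.range (γj - 1), U i) + U (γj - 1) := by
    rw [key e']
    conv_lhs => rw [hγsplit]
    rw [Finset.sum_range_succ]
  have h2 : (∑ i ∈ Finset.range (γj - 1), U i) ≤ f.coeff (e' + d) := by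
    rw [key (e' + d)]
    conv_rhs => rw [hγsplit]
    rw [Finset.sum_range_succ']
    have heq : ∀ i, (if (i + 1) * d ≤ e' + d then g.coeff (e' + d - (i + 1) * d) else 0) = U i := by
      intro i
      have h1 : (i + 1) * d = i * d + d := by ring
      have h2 : (i + 1) * d ≤ e' + d ↔ i * d ≤ e' := by omega
      have h3 : e' + d - (i + 1) * d = e' - i * d := by omega
      rw [hU]; simp only [h2, h3]
    have h0 : (0 : ℤ) ≤ if 0 * d ≤ e' + d then g.coeff (e' + d - 0 * d) else 0 := by
      split
      · exact hgn _
      · exact le_refl 0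
    calc ∑ i ∈ Finset.range (γj - 1), U i
        = ∑ i ∈ Finset.range (γj - 1),
            (if (i + 1) * d ≤ e' + d then g.coeff (e' + d - (i + 1) * d) else 0) := by
          exact (Finset.sum_congr rfl fun i _ => heq i).symm
      _ ≤ _ := le_add_of_nonneg_right h0
  have h3 : U (γj - 1) ≤ f.coeff (e' - d) := by
    rw [key (e' - d)]
    have hmem : γj - 2 ∈ Finset.range γj := by simp; omega
    have hterm : U (γj - 1) = (if (γj - 2) * d ≤ e' - d then g.coeff (e' - d - (γj - 2) * d) else 0) := by
      have e1 : (γj - 1) * d = (γj - 2) * d + d := by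
        have : γj - 1 = (γj - 2) + 1 := by omega
        rw [this]; ring
      have e2 : (γj - 1) * d ≤ e' ↔ (γj - 2) * d ≤ e' - d := by omega
      have e3 : e' - (γj - 1) * d = e' - d - (γj - 2) * d := by omega
      rw [hU]; simp only [e2, e3]
    rw [hterm]
    exact Finset.single_le_sum
      (f := fun i => if i * d ≤ e' - d then g.coeff (e' - d - i * d) else 0)
      (fun i _ => by split <;> [exact hgn _; exact le_refl 0]) hmem
  linarith
end
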